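/- Let p be a prime number, let B be an abelian group, let A be a finite abelian p-group, and let ι : A → B be an injective group homomorphism. Then ι admits a group-homomorphism retraction (equivalently, ι(A) is a direct summand of B) if and only if for every m ∈ ℕ the induced homomorphism A/p^m A → B/p^m B is injective. (Lemma 5.1 of the paper; the 'if' direction uses that a pure subgroup of bounded exponent is a direct summand.) -/

import Mathlib

lemma zmod_dvd_of_ann {n : ℕ} [NeZero n] (d e : ZMod n)
    (h : ∀ x : ZMod n, x * d = 0 → x * e = 0) : ∃ c : ZMod n, e = c * d := by
  have hn : 0 < n := Nat.pos_of_ne_zero (NeZero.ne n)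
  set g := Nat.gcd (ZMod.val d) n with hg
  have hgn : g ∣ n := Nat.gcd_dvd_right _ _
  have hgd : g ∣ ZMod.val d := Nat.gcd_dvd_left _ _
  have hgpos : 0 < g := Nat.gcd_pos_of_pos_right _ hn
  have hd : ((ZMod.val d : ℕ) : ZMod n) = d := ZMod.natCast_rightInverse d
  have he : ((ZMod.val e : ℕ) : ZMod n) = e := ZMod.natCast_rightInverse e
  have h1 : ((n / g : ℕ) : ZMod n) * d = 0 := by
    rw [← hd, ← Nat.cast_mul, ZMod.natCast_eq_zero_iff]
    obtain ⟨t, ht⟩ := hgd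
    exact ⟨t, by rw [ht, ← Nat.mul_assoc, Nat.div_mul_cancel hgn]⟩
  have h2 : n ∣ (n / g) * ZMod.val e := by
    rw [← ZMod.natCast_eq_zero_iff, Nat.cast_mul, he]
    exact h _ h1
  have h3 : g ∣ ZMod.val e := by
    obtain ⟨u, hu⟩ := hgn
    have hupos : 0 < u := by
      rcases Nat.eq_zero_or_pos u with h0 | h0
      · exact absurd (by rw [hu, h0, Nat.mul_zero]) hn.ne'
      · exact h0
    have hng : n / g = u := by rw [hu, Nat.mul_div_cancel_left _ hgpos]
    rw [hng] at h2
    obtain ⟨t, ht⟩ : g * u ∣ u * ZMod.val e := hu ▸ h2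
    refine ⟨t, Nat.eq_of_mul_eq_mul_left hupos ?_⟩
    rw [ht]; ring
  -- Bezout
  have hbez : ((g : ℤ) : ZMod n) = d * ((Nat.gcdA (ZMod.val d) n : ℤ) : ZMod n) := by
    rw [hg, Nat.gcd_eq_gcd_ab]
    push_cast
    rw [hd]
    simp [ZMod.natCast_self]
  obtain ⟨t2, ht2⟩ := h3
  refine ⟨((Nat.gcdA (ZMod.val d) n : ℤ) : ZMod n) * (t2 : ℕ), ?_⟩
  rw [← he, ht2]
  push_cast
  rw [show ((g:ℕ) : ZMod n) = (g : ℤ) by push_cast; ring, hbez]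
  ring

lemma zmod_baer (n : ℕ) [NeZero n] : Module.Baer (ZMod n) (ZMod n) := by
  haveI : IsPrincipalIdealRing (ZMod n) :=
    IsPrincipalIdealRing.of_surjective (Int.castRingHom (ZMod n)) ZMod.intCast_surjective
  intro I gI
  obtain ⟨d, rfl⟩ : ∃ d, I = Ideal.span {d} :=
    ⟨_, (Ideal.span_singleton_generator I).symm⟩
  have hdI : d ∈ Ideal.span {d} := Ideal.mem_span_singleton_self d
  obtain ⟨c, hc⟩ := zmod_dvd_of_ann d (gI ⟨d, hdI⟩) (fun x hx => by
    have h0 : (x • (⟨d, hdI⟩ : Ideal.span {d})) = 0 := by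
      apply Subtype.ext
      simpa [smul_eq_mul] using hx
    have : x * gI ⟨d, hdI⟩ = gI (x • ⟨d, hdI⟩) := by
      rw [map_smul]; simp [smul_eq_mul]
    rw [this, h0, map_zero])
  refine ⟨LinearMap.toSpanSingleton _ _ c, ?_⟩
  intro x hx
  obtain ⟨z, rfl⟩ := Ideal.mem_span_singleton'.mp hx
  have h1 : (⟨z * d, hx⟩ : Ideal.span {d}) = z • ⟨d, hdI⟩ := by
    apply Subtype.ext; simp [smul_eq_mul]
  rw [h1, map_smul, LinearMap.toSpanSingleton_apply]
  simp only [smul_eq_mul]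
  rw [hc]; ring

universe u v

lemma lemma51_aux (p : ℕ) (hp : p.Prime) (N : ℕ) :
    ∀ {A : Type u} {B : Type v} [AddCommGroup A] [AddCommGroup B] [Finite A],
      Nat.card A ≤ N → (∀ a : A, ∃ n : ℕ, p ^ n • a = 0) →
      ∀ (ι : A →+ B), Function.Injective ι →
      (∀ m : ℕ, ∀ a : A, (∃ b : B, ι a = p ^ m • b) → ∃ a' : A, a = p ^ m • a') →
      ∃ r : B →+ A, r.comp ι = AddMonoidHom.id A := by
  induction N with
  | zero =>
    intro A B _ _ _ hcard hA ι hι hpure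
    have := Nat.card_pos (α := A)
    omega
  | succ N ih =>
    intro A B _ _ _ hcard hA ι hι hpure
    by_cases hsub : Subsingleton A
    · exact ⟨0, by ext x; simp [Subsingleton.elim x 0]⟩
    have hnt : Nontrivial A := not_subsingleton_iff_nontrivial.mp hsub
    -- choose an element of maximal order
    obtain ⟨a, ha_exp⟩ :=
      AddMonoid.exists_addOrderOf_eq_exponent (G := A) AddMonoid.ExponentExists.of_finite
    have hdvd : ∀ b : A, addOrderOf b ∣ addOrderOf a := by
      rw [ha_exp]; exact fun b => AddMonoid.addOrder_dvd_exponent b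
    obtain ⟨nn, hnn⟩ := hA a
    obtain ⟨k, -, hk⟩ :=
      (Nat.dvd_prime_pow hp).mp (addOrderOf_dvd_of_nsmul_eq_zero hnn)
    have hexp : ∀ b : A, p ^ k • b = 0 := fun b =>
      addOrderOf_dvd_iff_nsmul_eq_zero.mp (hk ▸ hdvd b)
    have ha0 : a ≠ 0 := by
      intro h
      apply hsub
      constructor
      intro b c
      have hb : b = 0 := AddMonoid.addOrderOf_eq_one_iff.mp (Nat.dvd_one.mp (by simpa [h] using hdvd b))
      have hc : c = 0 := AddMonoid.addOrderOf_eq_one_iff.mp (Nat.dvd_one.mp (by simpa [h] using hdvd c))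
      rw [hb, hc]
    haveI : NeZero (p ^ k) := ⟨(pow_pos hp.pos k).ne'⟩
    -- the subgroup p^k B and the quotient
    set pkB : AddSubgroup B :=
      (AddMonoidHom.mk' (fun b : B => p ^ k • b) (fun x y => smul_add _ x y)).range with hpkB
    set π : B →+ B ⧸ pkB := QuotientAddGroup.mk' pkB with hπ
    have hQ : ∀ x : B ⧸ pkB, p ^ k • x = 0 := by
      intro x
      induction x using QuotientAddGroup.induction_on with
      | H b =>
        show p ^ k • π b = 0
        rw [← map_nsmul]
        exact (QuotientAddGroup.eq_zero_iff _).mpr ⟨b, rfl⟩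
    haveI : Module (ZMod (p ^ k)) (B ⧸ pkB) := AddCommGroup.zmodModule hQ
    set abar : B ⧸ pkB := π (ι a) with habar
    -- injectivity of the span map, from purity
    have hi : Function.Injective ⇑(LinearMap.toSpanSingleton (ZMod (p ^ k)) (B ⧸ pkB) abar) := by
      rw [injective_iff_map_eq_zero]
      intro x hx
      obtain ⟨z, rfl⟩ := ZMod.intCast_surjective x
      rw [LinearMap.toSpanSingleton_apply, Int.cast_smul_eq_zsmul] at hx
      have hx' : π (ι (z • a)) = 0 := by
        rw [map_zsmul, map_zsmul]; exact hx
      obtain ⟨b, hb⟩ := (QuotientAddGroup.eq_zero_iff _).mp hx'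
      obtain ⟨a2, ha2⟩ := hpure k (z • a) ⟨b, hb.symm⟩
      have hz0 : z • a = 0 := by rw [ha2, hexp]
      rw [ZMod.intCast_zmod_eq_zero_iff_dvd]
      have := addOrderOf_dvd_iff_zsmul_eq_zero.mpr hz0
      rwa [hk] at this
    obtain ⟨f, hf⟩ := (zmod_baer (p ^ k)).extension_property
      (LinearMap.toSpanSingleton (ZMod (p ^ k)) (B ⧸ pkB) abar) hi LinearMap.id
    have hfa : f abar = 1 := by
      have := DFunLike.congr_fun hf (1 : ZMod (p ^ k))
      simpa [LinearMap.toSpanSingleton_apply] using this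
    -- the retraction onto the cyclic subgroup generated by a
    set lifthom : ZMod (p ^ k) →+ A :=
      ZMod.lift (p ^ k) ⟨zmultiplesHom A a, by
        have h0 : ((p ^ k : ℕ) : ℤ) • a = 0 := by rw [natCast_zsmul]; exact hexp a
        simpa using h0⟩ with hlifthom
    set r₁ : B →+ A := lifthom.comp (f.toAddMonoidHom.comp π) with hr₁def
    have hliftz : ∀ z : ℤ, lifthom ((z : ℤ) : ZMod (p ^ k)) = z • a := by
      intro z; rw [hlifthom, ZMod.lift_coe]; rfl
    have hr₁ : ∀ b : B, ∃ j : ℤ, r₁ b = j • a := by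
      intro b
      obtain ⟨z, hz⟩ := ZMod.intCast_surjective (f (π b))
      exact ⟨z, by rw [hr₁def]; simp only [AddMonoidHom.comp_apply, LinearMap.toAddMonoidHom_coe,
        ← hz, hliftz]⟩
    have hr₁a : r₁ (ι a) = a := by
      rw [hr₁def]
      simp only [AddMonoidHom.comp_apply, LinearMap.toAddMonoidHom_coe, ← habar, hfa]
      have : (1 : ZMod (p ^ k)) = ((1 : ℤ) : ZMod (p ^ k)) := by norm_cast
      rw [this, hliftz, one_zsmul]
    set s : A →+ A := r₁.comp ι with hsdef
    have hsa : s a = a := hr₁a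
    have hs_mult : ∀ x : A, ∃ j : ℤ, s x = j • a := fun x => hr₁ (ι x)
    have hss : ∀ x : A, s (s x) = s x := by
      intro x
      obtain ⟨j, hj⟩ := hs_mult x
      rw [hj, map_zsmul, hsa]
    set ρ : B →+ B := ι.comp r₁ with hρdef
    have hρι : ∀ x : A, ρ (ι x) = ι (s x) := fun x => rfl
    have hρρ : ∀ b : B, ρ (ρ b) = ρ b := by
      intro b
      obtain ⟨j, hj⟩ := hr₁ b
      show ι (r₁ (ι (r₁ b))) = ι (r₁ b)
      rw [hj, map_zsmul ι, map_zsmul r₁, hr₁a, map_zsmul ι]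
    -- the complement data
    have hmemK : ∀ x : s.ker, ι x ∈ ρ.ker := by
      intro x
      rw [AddMonoidHom.mem_ker, hρι, AddMonoidHom.mem_ker.mp x.2, map_zero]
    set ι' : s.ker →+ ρ.ker :=
      (ι.comp s.ker.subtype).codRestrict ρ.ker hmemK with hι'def
    have hι'val : ∀ x : s.ker, ((ι' x : B)) = ι x := fun x => rfl
    have hι'inj : Function.Injective ι' := by
      intro x y h
      exact Subtype.ext (hι congr(((($h) : ρ.ker) : B)))
    have htor' : ∀ x : s.ker, ∃ n : ℕ, p ^ n • x = 0 := by
      intro x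
      obtain ⟨nx, hnx⟩ := hA x.val
      exact ⟨nx, Subtype.ext (by simpa using hnx)⟩
    have hpure' : ∀ m : ℕ, ∀ x : s.ker, (∃ b : ρ.ker, ι' x = p ^ m • b) →
        ∃ x' : s.ker, x = p ^ m • x' := by
      intro m x ⟨b, hb⟩
      have hb' : ι x.val = p ^ m • (b : B) := by
        have := congr((($hb : ρ.ker) : B))
        simpa [hι'val] using this
      obtain ⟨a2, ha2⟩ := hpure m x.val ⟨b, hb'⟩
      have hsx : s x.val = 0 := AddMonoidHom.mem_ker.mp x.2
      have hsa2 : p ^ m • s a2 = 0 := by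
        rw [← map_nsmul, ← ha2, hsx]
      have hmem : a2 - s a2 ∈ s.ker := by
        rw [AddMonoidHom.mem_ker, map_sub, hss, sub_self]
      refine ⟨⟨a2 - s a2, hmem⟩, Subtype.ext ?_⟩
      show x.val = p ^ m • (a2 - s a2)
      rw [smul_sub, hsa2, sub_zero, ← ha2]
    -- cardinality decreases
    have hanotker : a ∉ s.ker := by
      rw [AddMonoidHom.mem_ker, hsa]
      exact ha0
    have hcard' : Nat.card s.ker ≤ N := by
      have hne : s.ker ≠ ⊤ := fun h => hanotker (h ▸ AddSubgroup.mem_top a)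
      have hlt : Nat.card s.ker < Nat.card A := by
        rcases lt_or_eq_of_le (Nat.card_le_card_of_injective _ s.ker.subtype_injective) with h | h
        · exact h
        · exact absurd (AddSubgroup.eq_top_of_card_eq _ h) hne
      omega
    obtain ⟨r', hr'⟩ := ih hcard' htor' ι' hι'inj hpure'
    -- assemble the retraction
    have hprojmem : ∀ b : B, b - ρ b ∈ ρ.ker := by
      intro b
      rw [AddMonoidHom.mem_ker, map_sub, hρρ, sub_self]
    set proj : B →+ ρ.ker :=
      (AddMonoidHom.id B - ρ).codRestrict ρ.ker (fun b => by simpa using hprojmem b) with hproj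
    refine ⟨r₁ + (s.ker.subtype.comp (r'.comp proj)), ?_⟩
    ext x
    have hmemx : x - s x ∈ s.ker := by
      rw [AddMonoidHom.mem_ker, map_sub, hss, sub_self]
    have hprojx : proj (ι x) = ι' ⟨x - s x, hmemx⟩ := by
      apply Subtype.ext
      show ι x - ρ (ι x) = ι (x - s x)
      rw [hρι, map_sub]
    have hr'x : r' (proj (ι x)) = ⟨x - s x, hmemx⟩ := by
      rw [hprojx]
      exact DFunLike.congr_fun hr' ⟨x - s x, hmemx⟩
    show r₁ (ι x) + (s.ker.subtype (r' (proj (ι x)))) = x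
    rw [hr'x]
    show s x + (x - s x) = x
    abel


/-- **Lemma 5.1.** Let `p` be a prime, `B` an abelian group, `A` a finite abelian
`p`-group and `ι : A → B` an injective homomorphism. Then `ι` admits a
group-homomorphism retraction if and only if for every `m ∈ ℕ` the induced map
`A/p^m A → B/p^m B` is injective (expressed elementwise: if `ι a ∈ p^m B` then
`a ∈ p^m A`). -/
theorem retraction_iff_purity_lemma_5_1
    (p : ℕ) (hp : p.Prime)
    {A B : Type*} [AddCommGroup A] [AddCommGroup B]
    [Finite A] (hA : ∀ a : A, ∃ n : ℕ, p ^ n • a = 0)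
    (ι : A →+ B) (hι : Function.Injective ι) :
    (∃ r : B →+ A, r.comp ι = AddMonoidHom.id A) ↔
    (∀ m : ℕ, ∀ a : A, (∃ b : B, ι a = p ^ m • b) → ∃ a' : A, a = p ^ m • a') := by
  constructor
  · rintro ⟨r, hr⟩ m a ⟨b, hb⟩
    refine ⟨r b, ?_⟩
    have h1 : r (ι a) = a := DFunLike.congr_fun hr a
    rw [← h1, hb, map_nsmul]
  · intro hpure
    exact lemma51_aux p hp (Nat.card A) le_rfl hA ι hι hpure
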